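/- Let Ω ⊂ ℝ^N be an open bounded set. Then the Fraenkel asymmetry satisfies A(Ω) ≤ 2N · d_N(Ω), where d_N(Ω) = 1 - r_Ω / R_Ω, r_Ω is the inradius of Ω and R_Ω = (|Ω|/ω_N)^(1/N). -/

import Mathlib

open MeasureTheory Metric

/-- The Fraenkel asymmetry of a set `E ⊆ ℝ^N`. -/
noncomputable def fraenkelAsymmetry (N : ℕ) (E : Set (EuclideanSpace ℝ (Fin N))) : ℝ :=
  sInf { a : ℝ | ∃ (c : EuclideanSpace ℝ (Fin N)) (r : ℝ), 0 < r ∧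
    volume (ball c r) = volume E ∧
    a = (volume (symmDiff E (ball c r))).toReal / (volume E).toReal }

/-- The inradius of a set: the supremum of the radii of balls contained in it. -/
noncomputable def inradius (N : ℕ) (Ω : Set (EuclideanSpace ℝ (Fin N))) : ℝ :=
  sSup { r : ℝ | 0 < r ∧ ∃ c : EuclideanSpace ℝ (Fin N), ball c r ⊆ Ω }

/-- Comparison between the Fraenkel asymmetry and the Hansen–Nadirashvili asymmetry
`d_N(Ω) = 1 - r_Ω / R_Ω`: one has `A(Ω) ≤ 2 N d_N(Ω)`. -/
theorem fraenkelAsymmetry_le_hansenNadirashvili (N : ℕ) (Ω : Set (EuclideanSpace ℝ (Fin N)))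
    (hΩ : IsOpen Ω) (hb : Bornology.IsBounded Ω) (hpos : 0 < volume Ω) :
    fraenkelAsymmetry N Ω ≤
      2 * N * (1 - inradius N Ω /
        ((volume Ω).toReal / (volume (ball (0 : EuclideanSpace ℝ (Fin N)) 1)).toReal)
          ^ ((1 : ℝ) / N)) := by
  rcases Nat.eq_zero_or_pos N with hN0 | hN
  · -- dimension 0 : the space is a single point
    subst hN0
    have hsub : Subsingleton (EuclideanSpace ℝ (Fin 0)) := by
      constructor; intro a b; ext i; exact i.elim0
    have hΩne : Ω.Nonempty := nonempty_of_measure_ne_zero hpos.ne'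
    obtain ⟨x, hx⟩ := hΩne
    have hΩu : Ω = Set.univ := Set.eq_univ_of_forall fun y => by
      rwa [Subsingleton.elim y x]
    have hbu : ball x 1 = Set.univ := Set.eq_univ_of_forall fun y => by
      simp [mem_ball, Subsingleton.elim y x]
    have h0 : (0 : ℝ) ∈ { a : ℝ | ∃ (c : EuclideanSpace ℝ (Fin 0)) (r : ℝ), 0 < r ∧
        volume (ball c r) = volume Ω ∧
        a = (volume (symmDiff Ω (ball c r))).toReal / (volume Ω).toReal } := by
      refine ⟨x, 1, one_pos, by rw [hbu, hΩu], ?_⟩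
      rw [hbu, hΩu, symmDiff_self]
      simp
    have hbdd : BddBelow { a : ℝ | ∃ (c : EuclideanSpace ℝ (Fin 0)) (r : ℝ), 0 < r ∧
        volume (ball c r) = volume Ω ∧
        a = (volume (symmDiff Ω (ball c r))).toReal / (volume Ω).toReal } := by
      refine ⟨0, fun a ha => ?_⟩
      obtain ⟨c, r, hr, hvol, rfl⟩ := ha
      positivity
    have := csInf_le hbdd h0
    simpa [fraenkelAsymmetry] using this
  · -- main case N ≥ 1
    have hNR : (0 : ℝ) < N := by exact_mod_cast hN
    have hω_pos : 0 < volume (ball (0 : EuclideanSpace ℝ (Fin N)) 1) :=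
      measure_ball_pos _ _ one_pos
    have hω_fin : volume (ball (0 : EuclideanSpace ℝ (Fin N)) 1) < ⊤ := measure_ball_lt_top
    have hΩfin : volume Ω < ⊤ := hb.measure_lt_top
    set ω : ENNReal := volume (ball (0 : EuclideanSpace ℝ (Fin N)) 1) with hωdef
    set w : ℝ := ω.toReal with hwdef
    have hwpos : 0 < w := ENNReal.toReal_pos hω_pos.ne' hω_fin.ne
    set V : ℝ := (volume Ω).toReal with hVdef
    have hVpos : 0 < V := ENNReal.toReal_pos hpos.ne' hΩfin.ne
    set R : ℝ := (V / w) ^ ((1 : ℝ) / N) with hRdef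
    have hRpos : 0 < R := Real.rpow_pos_of_pos (div_pos hVpos hwpos) _
    have hRN : R ^ N = V / w := by
      rw [hRdef, ← Real.rpow_natCast ((V / w) ^ ((1 : ℝ) / N)) N,
        ← Real.rpow_mul (div_pos hVpos hwpos).le, one_div,
        inv_mul_cancel₀ (by positivity : (N : ℝ) ≠ 0), Real.rpow_one]
    have hballvol : ∀ (c : EuclideanSpace ℝ (Fin N)) (r : ℝ), 0 < r →
        volume (ball c r) = ENNReal.ofReal (r ^ N) * ω := by
      intro c r hr
      rw [Measure.addHaar_ball_of_pos volume c hr, finrank_euclideanSpace_fin, hωdef]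
    have hballR : ∀ c : EuclideanSpace ℝ (Fin N), volume (ball c R) = volume Ω := by
      intro c
      rw [hballvol c R hRpos, hRN, ENNReal.ofReal_div_of_pos hwpos, hVdef, hwdef,
        ENNReal.ofReal_toReal hΩfin.ne, ENNReal.ofReal_toReal hω_fin.ne,
        ENNReal.div_mul_cancel hω_pos.ne' hω_fin.ne]
    have hballtoReal : ∀ (c : EuclideanSpace ℝ (Fin N)) (r : ℝ), 0 < r →
        (volume (ball c r)).toReal = r ^ N * w := by
      intro c r hr
      rw [hballvol c r hr, ENNReal.toReal_mul, ENNReal.toReal_ofReal (by positivity), hwdef]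
    set S := { r : ℝ | 0 < r ∧ ∃ c : EuclideanSpace ℝ (Fin N), ball c r ⊆ Ω } with hSdef
    have hbdd : BddBelow { a : ℝ | ∃ (c : EuclideanSpace ℝ (Fin N)) (r : ℝ), 0 < r ∧
        volume (ball c r) = volume Ω ∧
        a = (volume (symmDiff Ω (ball c r))).toReal / (volume Ω).toReal } := by
      refine ⟨0, fun a ha => ?_⟩
      obtain ⟨c, r, hr, hvol, rfl⟩ := ha
      positivity
    -- key bound : for every admissible inradius candidate r', A ≤ 2N(1 - r'/R)
    have key : ∀ r' ∈ S, fraenkelAsymmetry N Ω ≤ 2 * N * (1 - r' / R) := by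
      rintro r' ⟨hr', c, hsub⟩
      -- r' ≤ R
      have hr'R : r' ≤ R := by
        have h1 : volume (ball c r') ≤ volume (ball c R) := by
          rw [hballR c]; exact measure_mono hsub
        rw [hballvol c r' hr', hballvol c R hRpos] at h1
        have h2 : ENNReal.ofReal (r' ^ N) ≤ ENNReal.ofReal (R ^ N) :=
          (ENNReal.mul_le_mul_iff_left hω_pos.ne' hω_fin.ne).1 h1
        have h3 : r' ^ N ≤ R ^ N := by
          rwa [ENNReal.ofReal_le_ofReal_iff (by positivity)] at h2
        exact le_of_pow_le_pow_left₀ hN.ne' hRpos.le h3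
      set B := ball c R with hBdef
      set b := ball c r' with hbdef
      have hBmeas : MeasurableSet B := measurableSet_ball
      have hBvol : volume B = volume Ω := hballR c
      have hBfin : volume B < ⊤ := hBvol ▸ hΩfin
      -- μ(Ω \ B) = μ(B \ Ω)
      have hΩBfin : volume (Ω ∩ B) ≠ ⊤ := (lt_of_le_of_lt (measure_mono Set.inter_subset_left) hΩfin).ne
      have e1 : volume (Ω \ B) + volume (Ω ∩ B) = volume Ω := measure_diff_add_inter Ω hBmeas
      have e2 : volume (B \ Ω) + volume (Ω ∩ B) = volume Ω := by
        have := measure_diff_add_inter (μ := volume) B hΩ.measurableSet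
        rwa [Set.inter_comm B Ω, hBvol] at this
      have ediff : volume (Ω \ B) = volume (B \ Ω) := by
        have : volume (Ω ∩ B) + volume (Ω \ B) = volume (Ω ∩ B) + volume (B \ Ω) := by
          rw [add_comm, e1, add_comm, e2]
        exact (ENNReal.add_right_inj hΩBfin).1 this
      have hBΩfin : volume (B \ Ω) < ⊤ := lt_of_le_of_lt (measure_mono Set.diff_subset) hBfin
      -- bound on the symmetric difference
      have hsd : (volume (symmDiff Ω B)).toReal ≤ 2 * (R ^ N * w - r' ^ N * w) := by
        have hsd1 : volume (symmDiff Ω B) ≤ volume (Ω \ B) + volume (B \ Ω) := by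
          rw [Set.symmDiff_def]
          exact measure_union_le _ _
        have hsd2 : volume (Ω \ B) + volume (B \ Ω) = 2 * volume (B \ Ω) := by
          rw [ediff, two_mul]
        have hmono : volume (B \ Ω) ≤ volume (B \ b) := measure_mono (Set.diff_subset_diff_right hsub)
        have hBb : volume (B \ b) + volume b = volume B := by
          have := measure_diff_add_inter (μ := volume) B (measurableSet_ball (x := c) (ε := r'))
          rwa [Set.inter_eq_self_of_subset_right (ball_subset_ball hr'R)] at this
        have hBbfin : volume (B \ b) < ⊤ := lt_of_le_of_lt (measure_mono Set.diff_subset) hBfin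
        have hbfin : volume b < ⊤ := lt_of_le_of_lt (measure_mono (ball_subset_ball hr'R)) hBfin
        have hBbtoReal : (volume (B \ b)).toReal = R ^ N * w - r' ^ N * w := by
          have := congrArg ENNReal.toReal hBb
          rw [ENNReal.toReal_add hBbfin.ne hbfin.ne, hballtoReal c R hRpos, hballtoReal c r' hr'] at this
          linarith
        calc (volume (symmDiff Ω B)).toReal
            ≤ (2 * volume (B \ b)).toReal := by
              apply ENNReal.toReal_mono
              · exact (ENNReal.mul_lt_top (by norm_num) hBbfin).ne
              · exact le_trans hsd1 (hsd2 ▸ mul_le_mul_right hmono 2)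
          _ = 2 * (R ^ N * w - r' ^ N * w) := by
              rw [ENNReal.toReal_mul, hBbtoReal]; norm_num
      -- the candidate value of the asymmetry
      have hmem : (volume (symmDiff Ω B)).toReal / V ∈ { a : ℝ | ∃ (c : EuclideanSpace ℝ (Fin N)) (r : ℝ), 0 < r ∧
          volume (ball c r) = volume Ω ∧
          a = (volume (symmDiff Ω (ball c r))).toReal / (volume Ω).toReal } :=
        ⟨c, R, hRpos, hballR c, rfl⟩
      have hA : fraenkelAsymmetry N Ω ≤ (volume (symmDiff Ω B)).toReal / V := by
        rw [fraenkelAsymmetry]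
        exact csInf_le hbdd hmem
      -- numeric estimate
      have hVeq : V = R ^ N * w := by
        rw [hRN, div_mul_cancel₀ _ hwpos.ne']
      have hstep : (volume (symmDiff Ω B)).toReal / V ≤ 2 * (1 - (r' / R) ^ N) := by
        rw [div_le_iff₀ hVpos, hVeq]
        have : 2 * (1 - (r' / R) ^ N) * (R ^ N * w) = 2 * (R ^ N * w - r' ^ N * w) := by
          rw [div_pow, div_eq_mul_inv]
          field_simp
        rw [this]
        exact hsd
      have hbern : 1 - (r' / R) ^ N ≤ N * (1 - r' / R) := by
        have ht0 : 0 ≤ r' / R := by positivity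
        have := one_add_mul_le_pow (a := r' / R - 1) (by linarith) N
        have h' : (1 + (r' / R - 1)) ^ N = (r' / R) ^ N := by ring_nf
        rw [h'] at this
        nlinarith
      calc fraenkelAsymmetry N Ω ≤ (volume (symmDiff Ω B)).toReal / V := hA
        _ ≤ 2 * (1 - (r' / R) ^ N) := hstep
        _ ≤ 2 * (N * (1 - r' / R)) := by linarith
        _ = 2 * N * (1 - r' / R) := by ring
    -- S is nonempty
    have hSne : S.Nonempty := by
      obtain ⟨x, hx⟩ := nonempty_of_measure_ne_zero hpos.ne'
      obtain ⟨ε, hε, hball⟩ := Metric.isOpen_iff.1 hΩ x hx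
      exact ⟨ε, hε, x, hball⟩
    -- conclude by taking the supremum over r' ∈ S
    set A := fraenkelAsymmetry N Ω with hAdef
    have hsup : sSup S ≤ R * (1 - A / (2 * N)) := by
      apply csSup_le hSne
      intro r' hr'mem
      have hkey : A ≤ (1 - r' / R) * (2 * N) := by
        calc A ≤ 2 * N * (1 - r' / R) := key r' hr'mem
          _ = (1 - r' / R) * (2 * N) := by ring
      have h2N : (0 : ℝ) < 2 * N := by positivity
      have h1 : A / (2 * N) ≤ 1 - r' / R := by
        rw [div_le_iff₀ h2N]; exact hkey
      have h2 : r' / R ≤ 1 - A / (2 * N) := by linarith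
      calc r' = (r' / R) * R := by field_simp
        _ ≤ (1 - A / (2 * N)) * R := mul_le_mul_of_nonneg_right h2 hRpos.le
        _ = R * (1 - A / (2 * N)) := by ring
    have hinr : inradius N Ω ≤ R * (1 - A / (2 * N)) := by
      rw [inradius, ← hSdef]; exact hsup
    have h2N : (0 : ℝ) < 2 * N := by positivity
    have hfinal : A ≤ 2 * N * (1 - inradius N Ω / R) := by
      have h1 : inradius N Ω / R ≤ 1 - A / (2 * N) := by
        rw [div_le_iff₀ hRpos]
        calc inradius N Ω ≤ R * (1 - A / (2 * N)) := hinr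
          _ = (1 - A / (2 * N)) * R := by ring
      have h2 : A / (2 * N) ≤ 1 - inradius N Ω / R := by linarith
      calc A = (A / (2 * N)) * (2 * N) := by field_simp
        _ ≤ (1 - inradius N Ω / R) * (2 * N) := mul_le_mul_of_nonneg_right h2 h2N.le
        _ = 2 * N * (1 - inradius N Ω / R) := by ring
    exact hfinal
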